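/- Let D = (V, A, ψ) be a multidigraph, let s, t ∈ V, and let k ∈ ℕ. Let P and Q be two nonempty subsets of V with V = P ⊔ Q. Then |{B ∈ U_k : T(B) = Q}| = Σ_{m ∈ ℕ} C(|A(Q,P)|, m) · |X_{k−m}^{P,Q}|, where C(n, m) denotes the binomial coefficient. -/

import Mathlib

/-!
A multidigraph is given by two finite types `V` (vertices) and `A` (arcs)
together with a map `ψ : A → V × V` sending each arc to its (source, target) pair.
For a subset `B ⊆ A`, the induced subdigraph `D⟨B⟩` has vertex set `V` and arc set `B`.
-/

/-- There is an arc of `B` from `v` to `w` in the subdigraph `D⟨B⟩`. -/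
def ArcStep {V A : Type*} (ψ : A → V × V) (B : Set A) (v w : V) : Prop :=
  ∃ a ∈ B, ψ a = (v, w)

/-- `v` can `B`-reach `w`: the subdigraph `D⟨B⟩` has a walk from `v` to `w`. -/
def CanReach {V A : Type*} (ψ : A → V × V) (B : Set A) (v w : V) : Prop :=
  Relation.ReflTransGen (ArcStep ψ B) v w

/-- `B ⊆ A` is acyclic: the subdigraph `D⟨B⟩` has no directed cycles
(equivalently, no closed walk of positive length). -/
def IsAcyclic {V A : Type*} (ψ : A → V × V) (B : Set A) : Prop :=
  ∀ v : V, ¬ Relation.TransGen (ArcStep ψ B) v v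

/-- `B` is an `s`-convergence: `B` is acyclic and `s` is a to-root of `D⟨B⟩`,
i.e. every vertex can `B`-reach `s`. -/
def IsConvergence {V A : Type*} (ψ : A → V × V) (B : Set A) (s : V) : Prop :=
  IsAcyclic ψ B ∧ ∀ v : V, CanReach ψ B v s

/-- `γ_k(s)`: the number of `s`-convergences of size `k`. -/
noncomputable def gammaCount {V A : Type*} (ψ : A → V × V) (k : ℕ) (s : V) : ℕ :=
  {B : Set A | IsConvergence ψ B s ∧ B.ncard = k}.ncard

/-- The attraction basin of `s` with respect to `B`: all vertices that can `B`-reach `s`. -/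
def basin {V A : Type*} (ψ : A → V × V) (B : Set A) (s : V) : Set V :=
  {v : V | CanReach ψ B v s}

/-- `A(P,Q)`: the set of arcs with source in `P` and target in `Q`. -/
def arcsFromTo {V A : Type*} (ψ : A → V × V) (P Q : Set V) : Set A :=
  {a : A | (ψ a).1 ∈ P ∧ (ψ a).2 ∈ Q}

/-- The outdegree of a vertex: the number of arcs with source `v`. -/
noncomputable def outDeg {V A : Type*} (ψ : A → V × V) (v : V) : ℕ :=
  {a : A | (ψ a).1 = v}.ncard

/-- The indegree of a vertex: the number of arcs with target `v`. -/
noncomputable def inDeg {V A : Type*} (ψ : A → V × V) (v : V) : ℕ :=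
  {a : A | (ψ a).2 = v}.ncard

/-- The digraph is balanced: each vertex has outdegree equal to indegree. -/
def IsBalanced {V A : Type*} (ψ : A → V × V) : Prop :=
  ∀ v : V, outDeg ψ v = inDeg ψ v

/-- `U_k`: the set of all acyclic `k`-element subsets `B` of `A` such that each
vertex can `B`-reach `s` or can `B`-reach `t`. -/
def Uset {V A : Type*} (ψ : A → V × V) (s t : V) (k : ℕ) : Set (Set A) :=
  {B : Set A | IsAcyclic ψ B ∧ B.ncard = k ∧ basin ψ B s ∪ basin ψ B t = Set.univ}

/-- `X_i^{P,Q}`: the set of all acyclic `i`-element subsets `B` of `A` with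
`S(B) = P` and `T(B) = Q` (empty for negative `i`). -/
def Xset {V A : Type*} (ψ : A → V × V) (s t : V) (P Q : Set V) (i : ℤ) : Set (Set A) :=
  {B : Set A | IsAcyclic ψ B ∧ (B.ncard : ℤ) = i ∧ basin ψ B s = P ∧ basin ψ B t = Q}

/-- `|X_i^{P,Q}|`. -/
noncomputable def Xcount {V A : Type*} (ψ : A → V × V) (s t : V) (P Q : Set V) (i : ℤ) : ℕ :=
  (Xset ψ s t P Q i).ncard

section Aux

open Relation Set

variable {V A : Type*} {ψ : A → V × V} {s t : V} {P Q : Set V}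

lemma canReach_mono {B B' : Set A} (h : B ⊆ B') {v w : V} (hr : CanReach ψ B v w) :
    CanReach ψ B' v w :=
  Relation.ReflTransGen.mono (p := ArcStep ψ B') (fun _ _ ⟨x, hx, he⟩ => ⟨x, h hx, he⟩) _ _ hr

lemma acyclic_mono {B B' : Set A} (h : B ⊆ B') (hac : IsAcyclic ψ B') : IsAcyclic ψ B :=
  fun v hv => hac v (Relation.TransGen.mono (p := ArcStep ψ B') (fun _ _ ⟨x, hx, he⟩ => ⟨x, h hx, he⟩) _ _ hv)

lemma self_mem_basin {B : Set A} (v : V) : v ∈ basin ψ B v := Relation.ReflTransGen.refl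

lemma basin_mono {B B' : Set A} (h : B ⊆ B') (v : V) : basin ψ B v ⊆ basin ψ B' v :=
  fun _ hr => canReach_mono h hr

lemma mem_Q_of_not_P (hunion : P ∪ Q = Set.univ) {v : V} (h : v ∉ P) : v ∈ Q := by
  have hv : v ∈ P ∨ v ∈ Q := by rw [← Set.mem_union, hunion]; trivial
  tauto

lemma mem_P_of_not_Q (hunion : P ∪ Q = Set.univ) {v : V} (h : v ∉ Q) : v ∈ P := by
  have hv : v ∈ P ∨ v ∈ Q := by rw [← Set.mem_union, hunion]; trivial
  tauto

lemma not_P_of_mem_Q (hdisj : P ∩ Q = ∅) {v : V} (h : v ∈ Q) : v ∉ P := fun hp =>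
  (Set.eq_empty_iff_forall_notMem.mp hdisj v) ⟨hp, h⟩

lemma not_Q_of_mem_P (hdisj : P ∩ Q = ∅) {v : V} (h : v ∈ P) : v ∉ Q := fun hq =>
  (Set.eq_empty_iff_forall_notMem.mp hdisj v) ⟨h, hq⟩

/-- Every vertex of `P` can `B`-reach `s`. -/
lemma P_reaches_s (hdisj : P ∩ Q = ∅) {B : Set A} (hBt : basin ψ B t = Q)
    (hcov : basin ψ B s ∪ basin ψ B t = Set.univ) {v : V} (hv : v ∈ P) :
    CanReach ψ B v s := by
  have := hcov ▸ Set.mem_univ v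
  rcases this with h | h
  · exact h
  · exact absurd (hBt ▸ h) (not_Q_of_mem_P hdisj hv)

/-- `s ∈ P`. -/
lemma s_mem_P (hunion : P ∪ Q = Set.univ) (hdisj : P ∩ Q = ∅) {B : Set A}
    (hBt : basin ψ B t = Q) (hcov : basin ψ B s ∪ basin ψ B t = Set.univ)
    (hPne : P.Nonempty) : s ∈ P := by
  by_contra hs
  have hsQ : s ∈ Q := mem_Q_of_not_P hunion hs
  obtain ⟨p, hp⟩ := hPne
  have h1 : CanReach ψ B p s := P_reaches_s hdisj hBt hcov hp
  have h2 : CanReach ψ B s t := by rw [← hBt] at hsQ; exact hsQ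
  have : p ∈ basin ψ B t := Relation.ReflTransGen.trans h1 h2
  rw [hBt] at this
  exact not_Q_of_mem_P hdisj hp this

/-- Walks to `t` survive removal of the arcs from `Q` to `P`. -/
lemma reach_t_del (hdisj : P ∩ Q = ∅) {B : Set A} (hBt : basin ψ B t = Q) {v : V}
    (hv : CanReach ψ B v t) : CanReach ψ (B \ arcsFromTo ψ Q P) v t := by
  refine Relation.ReflTransGen.head_induction_on hv Relation.ReflTransGen.refl ?_
  intro x y hxy hyt ih
  obtain ⟨a0, ha0, he⟩ := hxy
  refine Relation.ReflTransGen.head ⟨a0, ⟨ha0, fun hF => ?_⟩, he⟩ ih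
  have hy : y ∈ Q := by rw [← hBt]; exact hyt
  have h2 : (ψ a0).2 ∈ P := hF.2
  rw [he] at h2
  exact not_P_of_mem_Q hdisj hy h2

lemma basin_t_del (hdisj : P ∩ Q = ∅) {B : Set A} (hBt : basin ψ B t = Q) :
    basin ψ (B \ arcsFromTo ψ Q P) t = Q := by
  apply Set.Subset.antisymm
  · rw [← hBt]; exact basin_mono Set.diff_subset t
  · intro v hv
    rw [← hBt] at hv
    exact reach_t_del hdisj hBt hv

/-- Walks from `P` to `s` survive removal of the arcs from `Q` to `P`. -/
lemma reach_s_del (hunion : P ∪ Q = Set.univ) (hdisj : P ∩ Q = ∅) {B : Set A}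
    (hBt : basin ψ B t = Q) {v : V} (hreach : CanReach ψ B v s) (hv : v ∈ P) :
    CanReach ψ (B \ arcsFromTo ψ Q P) v s := by
  have key : ∀ x, CanReach ψ B x s → x ∈ P → CanReach ψ (B \ arcsFromTo ψ Q P) x s := by
    intro x hx
    refine Relation.ReflTransGen.head_induction_on hx (fun _ => Relation.ReflTransGen.refl) ?_
    intro x y hxy hys ih hxP
    obtain ⟨a0, ha0, he⟩ := hxy
    have hyP : y ∈ P := by
      by_contra hyp
      have hyQ : y ∈ Q := mem_Q_of_not_P hunion hyp
      rw [← hBt] at hyQ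
      have : x ∈ basin ψ B t := Relation.ReflTransGen.head ⟨a0, ha0, he⟩ hyQ
      rw [hBt] at this
      exact not_Q_of_mem_P hdisj hxP this
    refine Relation.ReflTransGen.head ⟨a0, ⟨ha0, fun hF => ?_⟩, he⟩ (ih hyP)
    have h1 : (ψ a0).1 ∈ Q := hF.1
    rw [he] at h1
    exact not_Q_of_mem_P hdisj hxP h1
  exact key v hreach hv

/-- `Q` is closed under steps of `B \ A(Q,P)`. -/
lemma Q_closed_del (hunion : P ∪ Q = Set.univ) {B : Set A} {v w : V}
    (h : CanReach ψ (B \ arcsFromTo ψ Q P) v w) (hv : v ∈ Q) : w ∈ Q := by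
  have key : ∀ x, CanReach ψ (B \ arcsFromTo ψ Q P) x w → x ∈ Q → w ∈ Q := by
    intro x hx
    refine Relation.ReflTransGen.head_induction_on hx (fun h => h) ?_
    intro x y hxy hyw ih hxQ
    obtain ⟨a0, ⟨ha0, hnF⟩, he⟩ := hxy
    have hyQ : y ∈ Q := by
      by_contra hyq
      have hyP : y ∈ P := mem_P_of_not_Q hunion hyq
      exact hnF ⟨by rw [he]; exact hxQ, by rw [he]; exact hyP⟩
    exact ih hyQ
  exact key v h hv

lemma basin_s_del (hunion : P ∪ Q = Set.univ) (hdisj : P ∩ Q = ∅) {B : Set A}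
    (hBt : basin ψ B t = Q) (hcov : basin ψ B s ∪ basin ψ B t = Set.univ)
    (hPne : P.Nonempty) : basin ψ (B \ arcsFromTo ψ Q P) s = P := by
  apply Set.Subset.antisymm
  · intro v hv
    by_contra hvP
    have hvQ : v ∈ Q := mem_Q_of_not_P hunion hvP
    have : s ∈ Q := Q_closed_del hunion hv hvQ
    exact not_Q_of_mem_P hdisj (s_mem_P hunion hdisj hBt hcov hPne) this
  · intro v hv
    exact reach_s_del hunion hdisj hBt (P_reaches_s hdisj hBt hcov hv) hv

/-! ### Backward direction -/

/-- A single `M ∪ C`-step from `P` stays in `P` and is a `C`-step. -/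
lemma step_from_P (hunion : P ∪ Q = Set.univ) (hdisj : P ∩ Q = ∅) {M C : Set A}
    (hM : M ⊆ arcsFromTo ψ Q P) (hCt : basin ψ C t = Q) {x y : V}
    (h : ArcStep ψ (M ∪ C) x y) (hx : x ∈ P) : y ∈ P ∧ ArcStep ψ C x y := by
  obtain ⟨a0, ha0, he⟩ := h
  have haC : a0 ∈ C := by
    rcases ha0 with hm | hc
    · have h1 : (ψ a0).1 ∈ Q := (hM hm).1
      rw [he] at h1
      exact absurd hx (not_P_of_mem_Q hdisj h1)
    · exact hc
  refine ⟨?_, ⟨a0, haC, he⟩⟩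
  by_contra hyP
  have hyQ : y ∈ Q := mem_Q_of_not_P hunion hyP
  rw [← hCt] at hyQ
  have : x ∈ basin ψ C t := Relation.ReflTransGen.head ⟨a0, haC, he⟩ hyQ
  rw [hCt] at this
  exact not_Q_of_mem_P hdisj hx this

lemma transGen_from_P (hunion : P ∪ Q = Set.univ) (hdisj : P ∩ Q = ∅) {M C : Set A}
    (hM : M ⊆ arcsFromTo ψ Q P) (hCt : basin ψ C t = Q) {x y : V}
    (h : Relation.TransGen (ArcStep ψ (M ∪ C)) x y) (hx : x ∈ P) :
    y ∈ P ∧ Relation.TransGen (ArcStep ψ C) x y := by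
  induction h with
  | single h' =>
    obtain ⟨hy, hs⟩ := step_from_P hunion hdisj hM hCt h' hx
    exact ⟨hy, Relation.TransGen.single hs⟩
  | tail h' h'' ih =>
    obtain ⟨hb, htg⟩ := ih
    obtain ⟨hy, hs⟩ := step_from_P hunion hdisj hM hCt h'' hb
    exact ⟨hy, Relation.TransGen.tail htg hs⟩

lemma transGen_to_Q (hunion : P ∪ Q = Set.univ) (hdisj : P ∩ Q = ∅) {M C : Set A}
    (hM : M ⊆ arcsFromTo ψ Q P) (hCt : basin ψ C t = Q) {x y : V}
    (h : Relation.TransGen (ArcStep ψ (M ∪ C)) x y) (hy : y ∈ Q) :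
    x ∈ Q ∧ Relation.TransGen (ArcStep ψ C) x y := by
  refine Relation.TransGen.head_induction_on h ?_ ?_
  · intro x h'
    have hxQ : x ∈ Q := by
      by_contra hxq
      have hxP : x ∈ P := mem_P_of_not_Q hunion hxq
      exact not_Q_of_mem_P hdisj (step_from_P hunion hdisj hM hCt h' hxP).1 hy
    obtain ⟨a0, ha0, he⟩ := h'
    have haC : a0 ∈ C := by
      rcases ha0 with hm | hc
      · have h2 : (ψ a0).2 ∈ P := (hM hm).2
        rw [he] at h2
        exact absurd h2 (not_P_of_mem_Q hdisj hy)
      · exact hc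
    exact ⟨hxQ, Relation.TransGen.single ⟨a0, haC, he⟩⟩
  · intro x c h' hrest ih
    obtain ⟨hcQ, htg⟩ := ih
    have hxQ : x ∈ Q := by
      by_contra hxq
      have hxP : x ∈ P := mem_P_of_not_Q hunion hxq
      exact not_Q_of_mem_P hdisj (step_from_P hunion hdisj hM hCt h' hxP).1 hcQ
    obtain ⟨a0, ha0, he⟩ := h'
    have haC : a0 ∈ C := by
      rcases ha0 with hm | hc
      · have h2 : (ψ a0).2 ∈ P := (hM hm).2
        rw [he] at h2
        exact absurd h2 (not_P_of_mem_Q hdisj hcQ)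
      · exact hc
    exact ⟨hxQ, Relation.TransGen.head ⟨a0, haC, he⟩ htg⟩

lemma union_acyclic (hunion : P ∪ Q = Set.univ) (hdisj : P ∩ Q = ∅) {M C : Set A}
    (hM : M ⊆ arcsFromTo ψ Q P) (hC : IsAcyclic ψ C) (hCt : basin ψ C t = Q) :
    IsAcyclic ψ (M ∪ C) := by
  intro v hv
  by_cases hvP : v ∈ P
  · exact hC v (transGen_from_P hunion hdisj hM hCt hv hvP).2
  · exact hC v (transGen_to_Q hunion hdisj hM hCt hv (mem_Q_of_not_P hunion hvP)).2

lemma union_basin_t (hunion : P ∪ Q = Set.univ) (hdisj : P ∩ Q = ∅) {M C : Set A}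
    (hM : M ⊆ arcsFromTo ψ Q P) (hCt : basin ψ C t = Q) : basin ψ (M ∪ C) t = Q := by
  apply Set.Subset.antisymm
  · intro v hv
    rcases Relation.reflTransGen_iff_eq_or_transGen.mp hv with h | h
    · subst h; rw [← hCt]; exact self_mem_basin t
    · exact (transGen_to_Q hunion hdisj hM hCt h (by rw [← hCt]; exact self_mem_basin t)).1
  · rw [← hCt]; exact basin_mono Set.subset_union_right t

lemma union_cov (hunion : P ∪ Q = Set.univ) {M C : Set A}
    (hCs : basin ψ C s = P) (hCt : basin ψ C t = Q) :
    basin ψ (M ∪ C) s ∪ basin ψ (M ∪ C) t = Set.univ := by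
  rw [Set.eq_univ_iff_forall]
  intro v
  by_cases hvP : v ∈ P
  · exact Or.inl (basin_mono Set.subset_union_right s (hCs ▸ hvP))
  · exact Or.inr (basin_mono Set.subset_union_right t (hCt ▸ mem_Q_of_not_P hunion hvP))

/-- `C` contains no arcs from `Q` to `P`. -/
lemma C_disjoint_F (hdisj : P ∩ Q = ∅) {C : Set A} (hCs : basin ψ C s = P) {a : A}
    (haC : a ∈ C) (haF : a ∈ arcsFromTo ψ Q P) : False := by
  have hstep : ArcStep ψ C (ψ a).1 (ψ a).2 := ⟨a, haC, rfl⟩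
  have h2 : (ψ a).2 ∈ basin ψ C s := hCs ▸ haF.2
  have h3 : (ψ a).1 ∈ basin ψ C s := Relation.ReflTransGen.head hstep h2
  rw [hCs] at h3
  exact not_Q_of_mem_P hdisj h3 haF.1

end Aux


/-- For nonempty `P, Q` with `V = P ⊔ Q`,
`|{B ∈ U_k : T(B) = Q}| = Σ_{m ∈ ℕ} C(|A(Q,P)|, m) · |X_{k−m}^{P,Q}|`. -/
theorem count_T_eq_Q_as_sum {V A : Type*} [Fintype V] [Fintype A]
    (ψ : A → V × V) (s t : V) (k : ℕ)
    (P Q : Set V) (hP : P.Nonempty) (hQ : Q.Nonempty)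
    (hunion : P ∪ Q = Set.univ) (hdisj : P ∩ Q = ∅) :
    {B ∈ Uset ψ s t k | basin ψ B t = Q}.ncard =
      ∑ᶠ m : ℕ,
        Nat.choose (arcsFromTo ψ Q P).ncard m * Xcount ψ s t P Q ((k : ℤ) - m) := by
  classical
  set F : Set A := arcsFromTo ψ Q P with hF
  -- Step A: per-`m` count via a bijection.
  have key : ∀ m : ℕ,
      {B : Set A | (B ∈ Uset ψ s t k ∧ basin ψ B t = Q) ∧ (B ∩ F).ncard = m}.ncard
        = Nat.choose F.ncard m * Xcount ψ s t P Q ((k : ℤ) - m) := by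
    intro m
    set Lm : Set (Set A) :=
      {B : Set A | (B ∈ Uset ψ s t k ∧ basin ψ B t = Q) ∧ (B ∩ F).ncard = m} with hLm
    set Pm : Set (Set A) := {M : Set A | M ⊆ F ∧ M.ncard = m} with hPm
    set X : Set (Set A) := Xset ψ s t P Q ((k : ℤ) - m) with hX
    have hbij : Set.BijOn (fun B => (B ∩ F, B \ F)) Lm (Pm ×ˢ X) := by
      refine ⟨?_, ?_, ?_⟩
      · rintro B ⟨⟨⟨hac, hcard, hcov⟩, hBt⟩, hm⟩
        dsimp only
        refine Set.mem_prod.mpr ⟨⟨Set.inter_subset_right, hm⟩, ?_, ?_, ?_, ?_⟩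
        · exact acyclic_mono Set.diff_subset hac
        · have h1 : (B ∩ F).ncard + (B \ F).ncard = B.ncard :=
            Set.ncard_inter_add_ncard_diff_eq_ncard B F (Set.toFinite B)
          rw [hcard, hm] at h1
          show ((B \ F).ncard : ℤ) = (k : ℤ) - (m : ℤ)
          omega
        · exact basin_s_del hunion hdisj hBt hcov hP
        · exact basin_t_del hdisj hBt
      · rintro B1 - B2 - hEq
        have h1 : B1 ∩ F = B2 ∩ F := congrArg Prod.fst hEq
        have h2 : B1 \ F = B2 \ F := congrArg Prod.snd hEq
        calc B1 = (B1 ∩ F) ∪ (B1 \ F) := (Set.inter_union_diff B1 F).symm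
          _ = (B2 ∩ F) ∪ (B2 \ F) := by rw [h1, h2]
          _ = B2 := Set.inter_union_diff B2 F
      · rintro ⟨M, C⟩ hmem
        obtain ⟨⟨hMF, hMcard⟩, hCac, hCcard, hCs, hCt⟩ := Set.mem_prod.mp hmem
        dsimp only at hMF hMcard hCac hCcard hCs hCt
        have hdisjMC : ∀ a ∈ C, a ∉ F := fun a ha haF => C_disjoint_F hdisj hCs ha haF
        have hBF : (M ∪ C) ∩ F = M := by
          ext a
          constructor
          · rintro ⟨ha | ha, haF⟩
            · exact ha
            · exact (hdisjMC a ha haF).elim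
          · intro ha; exact ⟨Or.inl ha, hMF ha⟩
        have hBdiff : (M ∪ C) \ F = C := by
          ext a
          constructor
          · rintro ⟨ha | ha, haF⟩
            · exact (haF (hMF ha)).elim
            · exact ha
          · intro ha; exact ⟨Or.inr ha, hdisjMC a ha⟩
        have hMCd : Disjoint M C :=
          Set.disjoint_left.mpr (fun a haM haC => hdisjMC a haC (hMF haM))
        have hcardMC : (M ∪ C).ncard = k := by
          rw [Set.ncard_union_eq hMCd (Set.toFinite M) (Set.toFinite C), hMcard]
          omega
        refine ⟨M ∪ C, ⟨⟨⟨union_acyclic hunion hdisj hMF hCac hCt, hcardMC,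
          union_cov hunion hCs hCt⟩, union_basin_t hunion hdisj hMF hCt⟩,
          by rw [hBF]; exact hMcard⟩, ?_⟩
        rw [Prod.mk.injEq]
        exact ⟨hBF, hBdiff⟩
    have h1 : Lm.ncard = (Pm ×ˢ X).ncard := by
      rw [← hbij.image_eq, Set.ncard_image_of_injOn hbij.injOn]
    have h2 : (Pm ×ˢ X).ncard = Pm.ncard * X.ncard := by
      rw [← Nat.card_coe_set_eq, ← Nat.card_coe_set_eq, ← Nat.card_coe_set_eq,
        Nat.card_congr (Equiv.Set.prod Pm X), Nat.card_prod]
    have h3 : Pm.ncard = Nat.choose F.ncard m := by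
      have hFF : F.Finite := Set.toFinite F
      have himg : Pm = (fun (u : Finset A) => (↑u : Set A)) ''
          ↑(hFF.toFinset.powersetCard m) := by
        ext N
        simp only [hPm, Set.mem_setOf_eq, Set.mem_image, Finset.mem_coe,
          Finset.mem_powersetCard]
        constructor
        · rintro ⟨hNF, hNcard⟩
          refine ⟨(Set.toFinite N).toFinset, ⟨?_, ?_⟩, (Set.toFinite N).coe_toFinset⟩
          · intro a ha
            rw [Set.Finite.mem_toFinset] at ha
            rw [Set.Finite.mem_toFinset]
            exact hNF ha
          · rw [← Set.ncard_eq_toFinset_card N (Set.toFinite N)]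
            exact hNcard
        · rintro ⟨u, ⟨hu1, hu2⟩, rfl⟩
          refine ⟨?_, by rw [Set.ncard_coe_finset]; exact hu2⟩
          intro a ha
          have h4 := hu1 ha
          rw [Set.Finite.mem_toFinset] at h4
          exact h4
      rw [himg, Set.ncard_image_of_injOn (Finset.coe_injective.injOn),
        Set.ncard_coe_finset, Finset.card_powersetCard,
        ← Set.ncard_eq_toFinset_card F hFF]
    rw [h1, h2, h3]
    rfl
  -- Step B: the finsum is a finite sum over `range (k+1)`.
  have hsum : ∑ᶠ m : ℕ, Nat.choose F.ncard m * Xcount ψ s t P Q ((k : ℤ) - m)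
      = ∑ m ∈ Finset.range (k + 1),
          Nat.choose F.ncard m * Xcount ψ s t P Q ((k : ℤ) - m) := by
    apply finsum_eq_sum_of_support_subset
    intro m hm
    simp only [Function.mem_support, ne_eq] at hm
    simp only [Finset.coe_range, Set.mem_Iio]
    by_contra hmk
    push_neg at hmk
    apply hm
    have hempty : Xset ψ s t P Q ((k : ℤ) - m) = ∅ := by
      ext B
      simp only [Xset, Set.mem_setOf_eq, Set.mem_empty_iff_false, iff_false]
      rintro ⟨-, hcard, -⟩
      omega
    rw [Xcount, hempty, Set.ncard_empty, mul_zero]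
  rw [hsum]
  -- Step C: fiberwise decomposition of the left side.
  have hLfin : {B ∈ Uset ψ s t k | basin ψ B t = Q}.Finite := Set.toFinite _
  rw [Set.ncard_eq_toFinset_card _ hLfin]
  rw [Finset.card_eq_sum_card_fiberwise
    (f := fun B => (B ∩ F).ncard) (t := Finset.range (k + 1)) ?_]
  · refine Finset.sum_congr rfl fun m _ => ?_
    rw [← key m]
    have hfib : {B : Set A | (B ∈ Uset ψ s t k ∧ basin ψ B t = Q) ∧ (B ∩ F).ncard = m}
        = ↑(hLfin.toFinset.filter (fun B => (B ∩ F).ncard = m)) := by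
      ext B
      simp only [Set.mem_setOf_eq, Finset.coe_filter, Set.Finite.mem_toFinset,
        Set.mem_setOf_eq]
    rw [hfib, Set.ncard_coe_finset]
  · intro B hB
    rw [Finset.mem_coe, Set.Finite.mem_toFinset] at hB
    obtain ⟨⟨-, hcard, -⟩, -⟩ := hB
    rw [Finset.mem_coe, Finset.mem_range]
    show (B ∩ F).ncard < k + 1
    have hle : (B ∩ F).ncard ≤ B.ncard :=
      Set.ncard_le_ncard Set.inter_subset_left (Set.toFinite B)
    omega
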